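/- Let A be a symmetric n×n real matrix whose eigenvalues all lie in the interval [a,b]. Then all eigenvalues of the curvature operator of the second kind of A ⊙∧ id (i.e., the operator π ∘ (A ⊙∧ id) on trace-free symmetric two-tensors) lie in [2a, 2b]. -/

import Mathlib

open Finset

/-- The Kulkarni–Nomizu product `A ⊙∧ id`, acting on two-tensors `φ` by
`(Rφ)_{il} = Σ_{j,k} (A_{ik}δ_{jl} + A_{jl}δ_{ik} − A_{jk}δ_{il} − A_{il}δ_{jk}) φ_{jk}`. -/
noncomputable def KNid {n : ℕ} (A φ : Matrix (Fin n) (Fin n) ℝ) :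
    Matrix (Fin n) (Fin n) ℝ :=
  fun i l => ∑ j : Fin n, ∑ k : Fin n,
    (A i k * (if j = l then (1:ℝ) else 0) + A j l * (if i = k then (1:ℝ) else 0)
      - A j k * (if i = l then (1:ℝ) else 0) - A i l * (if j = k then (1:ℝ) else 0)) * φ j k

/-- Orthogonal projection onto trace-free symmetric two-tensors. -/
noncomputable def tracefreeProj {n : ℕ} (φ : Matrix (Fin n) (Fin n) ℝ) :
    Matrix (Fin n) (Fin n) ℝ :=
  φ - (φ.trace / n) • (1 : Matrix (Fin n) (Fin n) ℝ)

lemma quad_bound_aux {n : ℕ} (A : Matrix (Fin n) (Fin n) ℝ) (hA : A.IsSymm)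
    (a b : ℝ)
    (hspec : ∀ (μ : ℝ) (v : Fin n → ℝ), v ≠ 0 → A.mulVec v = μ • v → μ ∈ Set.Icc a b)
    (v : Fin n → ℝ) :
    a * (dotProduct v v) ≤ dotProduct v (A.mulVec v) ∧
      dotProduct v (A.mulVec v) ≤ b * (dotProduct v v) := by
  have hA' : A.IsHermitian := by
    rw [Matrix.IsHermitian, Matrix.conjTranspose_eq_transpose_of_trivial]; exact hA
  set B := hA'.eigenvectorBasis with hB
  set μ := hA'.eigenvalues with hμdef
  have hμ : ∀ i, μ i ∈ Set.Icc a b := by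
    intro i
    refine hspec (μ i) (B i) ?_ (hA'.mulVec_eigenvectorBasis i)
    have h0 := B.orthonormal.ne_zero i
    intro h
    exact h0 (by ext k; exact congrFun h k)
  set V : EuclideanSpace ℝ (Fin n) := WithLp.toLp 2 v with hV
  set W : EuclideanSpace ℝ (Fin n) := WithLp.toLp 2 (A.mulVec v) with hW
  have hinner : ∀ x y : EuclideanSpace ℝ (Fin n), (inner ℝ x y : ℝ) = ∑ i, x i * y i := by
    intro x y
    simp [PiLp.inner_apply, RCLike.inner_apply, starRingEnd_apply, star_trivial, mul_comm]
  have hdV : (inner ℝ V V : ℝ) = dotProduct v v := by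
    rw [hinner]; rfl
  have hdW : (inner ℝ V W : ℝ) = dotProduct v (A.mulVec v) := by
    rw [hinner]; rfl
  have hkey : ∀ i, (inner ℝ (B i) W : ℝ) = μ i * (inner ℝ (B i) V : ℝ) := by
    intro i
    rw [hinner, hinner]
    have h1 : ∑ k, B i k * W k = dotProduct (⇑(B i)) (A.mulVec v) := rfl
    rw [h1, Matrix.dotProduct_mulVec, ← Matrix.mulVec_transpose, hA,
      hA'.mulVec_eigenvectorBasis i]
    simp [dotProduct, Finset.mul_sum, mul_assoc]
    rfl
  have hQ : dotProduct v (A.mulVec v) = ∑ i, μ i * ((inner ℝ V (B i) : ℝ))^2 := by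
    rw [← hdW, ← B.sum_inner_mul_inner V W]
    refine Finset.sum_congr rfl fun i _ => ?_
    rw [hkey i, real_inner_comm (B i) V]; ring
  have hN : dotProduct v v = ∑ i, ((inner ℝ V (B i) : ℝ))^2 := by
    rw [← hdV, ← B.sum_inner_mul_inner V V]
    refine Finset.sum_congr rfl fun i _ => ?_
    rw [real_inner_comm (B i) V]; ring
  constructor
  · rw [hQ, hN, Finset.mul_sum]
    exact Finset.sum_le_sum fun i _ => mul_le_mul_of_nonneg_right (hμ i).1 (sq_nonneg _)
  · rw [hQ, hN, Finset.mul_sum]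
    exact Finset.sum_le_sum fun i _ => mul_le_mul_of_nonneg_right (hμ i).2 (sq_nonneg _)

lemma KNid_apply_aux {n : ℕ} (A φ : Matrix (Fin n) (Fin n) ℝ)
    (hsym : ∀ i j, φ i j = φ j i) (htr : ∑ j, φ j j = 0) (i l : Fin n) :
    KNid A φ i l = (∑ k, A i k * φ k l) + (∑ j, φ i j * A j l)
      - (if i = l then (∑ j, ∑ k, A j k * φ j k) else 0) := by
  unfold KNid
  simp only [sub_mul, add_mul, ite_mul, one_mul, zero_mul, mul_ite, mul_one, mul_zero,
    Finset.sum_sub_distrib, Finset.sum_add_distrib, Finset.sum_ite_eq, Finset.sum_ite_eq',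
    Finset.mem_univ, if_true]
  have h1 : (∑ x : Fin n, ∑ x1 : Fin n, if x = l then A i x1 * φ x x1 else 0)
      = ∑ k : Fin n, A i k * φ k l := by
    rw [Finset.sum_comm]
    simp only [Finset.sum_ite_eq', Finset.mem_univ, if_true]
    exact Finset.sum_congr rfl fun k _ => by rw [hsym l k]
  have h2 : (∑ x : Fin n, A x l * φ x i) = ∑ j : Fin n, φ i j * A j l :=
    Finset.sum_congr rfl fun j _ => by rw [hsym j i, mul_comm]
  have h3 : (∑ x : Fin n, ∑ x1 : Fin n, if i = l then A x x1 * φ x x1 else 0)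
      = if i = l then ∑ j : Fin n, ∑ k : Fin n, A j k * φ j k else 0 := by
    by_cases h : i = l <;> simp [h]
  have h4 : (∑ x : Fin n, A i l * φ x x) = 0 := by
    rw [← Finset.mul_sum, htr, mul_zero]
  rw [h1, h2, h3, h4, sub_zero]

theorem stmt11 {n : ℕ} (hn : 0 < n) (A : Matrix (Fin n) (Fin n) ℝ) (hA : A.IsSymm)
    (a b : ℝ)
    (hspec : ∀ (μ : ℝ) (v : Fin n → ℝ), v ≠ 0 → A.mulVec v = μ • v → μ ∈ Set.Icc a b)
    (lamE : ℝ) (φ : Matrix (Fin n) (Fin n) ℝ) (hφ : φ ≠ 0) (hφs : φ.IsSymm)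
    (hφtr : φ.trace = 0) (heig : tracefreeProj (KNid A φ) = lamE • φ) :
    lamE ∈ Set.Icc (2 * a) (2 * b) := by
  have hsym : ∀ i j, φ i j = φ j i := fun i j => congrFun (congrFun hφs j) i
  have htr : ∑ j, φ j j = 0 := hφtr
  have hent : ∀ i l, KNid A φ i l - ((KNid A φ).trace / n) * (if i = l then (1:ℝ) else 0)
      = lamE * φ i l := by
    intro i l
    have h := congrFun (congrFun heig i) l
    simpa [tracefreeProj, Matrix.sub_apply, Matrix.smul_apply, Matrix.one_apply,
      mul_ite, mul_one, mul_zero, smul_eq_mul] using h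
  set S : ℝ := ∑ l, ∑ i, φ l i * φ l i with hSdef
  set Q : ℝ := ∑ l, dotProduct (φ l) (A.mulVec (φ l)) with hQdef
  have hSpos : 0 < S := by
    have hentries : ∃ i l, φ i l ≠ 0 := by
      by_contra h
      push_neg at h
      exact hφ (by ext i l; exact h i l)
    obtain ⟨i, l, hil⟩ := hentries
    have hterm : 0 < φ i l * φ i l := mul_self_pos.mpr hil
    have h1 : φ i l * φ i l ≤ ∑ i', φ i i' * φ i i' :=
      Finset.single_le_sum (f := fun i' => φ i i' * φ i i')
        (fun _ _ => mul_self_nonneg _) (Finset.mem_univ l)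
    have h2 : (∑ i', φ i i' * φ i i') ≤ S := by
      rw [hSdef]
      exact Finset.single_le_sum (f := fun l' => ∑ i', φ l' i' * φ l' i')
        (fun l' _ => Finset.sum_nonneg fun _ _ => mul_self_nonneg _) (Finset.mem_univ i)
    linarith
  have hQ' : Q = ∑ l, ∑ i, φ l i * ∑ k, A i k * φ l k := by
    refine Finset.sum_congr rfl fun l _ => ?_
    simp [dotProduct, Matrix.mulVec]
  have hP1 : (∑ i, ∑ l, (∑ k, A i k * φ k l) * φ i l) = Q := by
    rw [hQ', Finset.sum_comm]
    refine Finset.sum_congr rfl fun l _ => Finset.sum_congr rfl fun i _ => ?_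
    rw [Finset.sum_mul, Finset.mul_sum]
    refine Finset.sum_congr rfl fun k _ => ?_
    rw [hsym k l, hsym i l]; ring
  have hP2 : (∑ i, ∑ l, (∑ j, φ i j * A j l) * φ i l) = Q := by
    rw [hQ']
    refine Finset.sum_congr rfl fun i _ => ?_
    simp only [Finset.sum_mul]
    rw [Finset.sum_comm]
    refine Finset.sum_congr rfl fun j _ => ?_
    rw [Finset.mul_sum]
    refine Finset.sum_congr rfl fun l _ => ?_
    ring
  have hP3 : (∑ i, ∑ l, (if i = l then (∑ j, ∑ k, A j k * φ j k) else 0) * φ i l) = 0 := by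
    simp only [ite_mul, zero_mul, Finset.sum_ite_eq, Finset.mem_univ, if_true]
    rw [← Finset.mul_sum, htr, mul_zero]
  have hδ : (∑ i, ∑ l, (((KNid A φ).trace / n) * (if i = l then (1:ℝ) else 0)) * φ i l) = 0 := by
    simp only [mul_ite, mul_one, mul_zero, ite_mul, zero_mul, Finset.sum_ite_eq,
      Finset.mem_univ, if_true]
    rw [← Finset.mul_sum, htr, mul_zero]
  have hL : (∑ i, ∑ l, (KNid A φ i l) * φ i l) = 2 * Q := by
    have : ∀ i l, (KNid A φ i l) * φ i l
        = (∑ k, A i k * φ k l) * φ i l + (∑ j, φ i j * A j l) * φ i l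
          - (if i = l then (∑ j, ∑ k, A j k * φ j k) else 0) * φ i l := by
      intro i l
      rw [KNid_apply_aux A φ hsym htr i l]; ring
    simp only [this, Finset.sum_sub_distrib, Finset.sum_add_distrib]
    rw [hP1, hP2, hP3, sub_zero]; ring
  have hmain : lamE * S = 2 * Q := by
    have hsum : (∑ i, ∑ l, (KNid A φ i l
          - ((KNid A φ).trace / n) * (if i = l then (1:ℝ) else 0)) * φ i l)
        = ∑ i, ∑ l, (lamE * φ i l) * φ i l := by
      refine Finset.sum_congr rfl fun i _ => Finset.sum_congr rfl fun l _ => ?_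
      rw [hent i l]
    simp only [sub_mul, Finset.sum_sub_distrib] at hsum
    rw [hL, hδ, sub_zero] at hsum
    rw [hsum, hSdef, Finset.mul_sum]
    refine Finset.sum_congr rfl fun i _ => ?_
    rw [Finset.mul_sum]
    refine Finset.sum_congr rfl fun l _ => ?_
    ring
  have hQa : a * S ≤ Q := by
    rw [hSdef, hQdef, Finset.mul_sum]
    refine Finset.sum_le_sum fun l _ => ?_
    have h := (quad_bound_aux A hA a b hspec (φ l)).1
    simpa [dotProduct] using h
  have hQb : Q ≤ b * S := by
    rw [hSdef, hQdef, Finset.mul_sum]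
    refine Finset.sum_le_sum fun l _ => ?_
    have h := (quad_bound_aux A hA a b hspec (φ l)).2
    simpa [dotProduct] using h
  constructor
  · exact le_of_mul_le_mul_right (by nlinarith) hSpos
  · exact le_of_mul_le_mul_right (by nlinarith) hSpos
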